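/- Let p be a prime with p ≥ 5 and let G be the affine group of the field 𝔽_p, i.e. the set 𝔽_p × 𝔽_pˣ with multiplication (a,b)·(c,d) = (a + bc, bd). Then there exists an element x ∈ G such that no group automorphism α of G satisfies α(x) = x⁻¹. -/

import Mathlib

/-- The affine group of a field `F`: the set `F × Fˣ` with multiplication
`(a,b)·(c,d) = (a + bc, bd)`. -/
@[ext]
structure Aff (F : Type*) [Field F] where
  a : F
  b : Fˣ

namespace Aff

variable {F : Type*} [Field F]

instance : Mul (Aff F) := ⟨fun z w => ⟨z.a + (z.b : F) * w.a, z.b * w.b⟩⟩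
instance : One (Aff F) := ⟨⟨0, 1⟩⟩
instance : Inv (Aff F) := ⟨fun z => ⟨-(((z.b⁻¹ : Fˣ) : F) * z.a), z.b⁻¹⟩⟩

lemma mul_def (z w : Aff F) : z * w = ⟨z.a + (z.b : F) * w.a, z.b * w.b⟩ := rfl
lemma one_def : (1 : Aff F) = ⟨0, 1⟩ := rfl
lemma inv_def (z : Aff F) : z⁻¹ = ⟨-(((z.b⁻¹ : Fˣ) : F) * z.a), z.b⁻¹⟩ := rfl

instance : Group (Aff F) where
  mul_assoc z w u := by
    simp only [mul_def, Aff.mk.injEq, Units.val_mul]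
    exact ⟨by ring, mul_assoc _ _ _⟩
  one_mul z := by
    obtain ⟨za, zb⟩ := z
    simp [mul_def, one_def]
  mul_one z := by
    obtain ⟨za, zb⟩ := z
    simp [mul_def, one_def]
  inv_mul_cancel z := by
    simp only [mul_def, inv_def, one_def, Aff.mk.injEq]
    exact ⟨by simp, inv_mul_cancel z.b⟩

end Aff

namespace Aff

variable {F : Type*} [Field F]

lemma pow_mk_one (a : F) (n : ℕ) : (⟨a, 1⟩ : Aff F) ^ n = ⟨(n : F) * a, 1⟩ := by
  induction n with
  | zero => simp [one_def]
  | succ n ih =>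
    rw [pow_succ, ih, mul_def]
    exact Aff.ext (by push_cast; simp; ring) (one_mul 1)

/-- Projection onto the multiplicative part, as a monoid hom. -/
def bHom : Aff F →* Fˣ where
  toFun z := z.b
  map_one' := rfl
  map_mul' _ _ := rfl

end Aff

/-- The automorphism of the affine group induced by a ring automorphism `φ` of `F`,
given by `(a,b) ↦ (φ(a), φ(b))`. -/
def affMap {F : Type*} [Field F] (φ : F ≃+* F) (h : Aff F) : Aff F :=
  ⟨φ h.a, Units.map (φ : F →+* F).toMonoidHom h.b⟩

/-- For a prime `p ≥ 5`, the affine group of `𝔽_p` contains an element `x`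
such that no group automorphism maps `x` to `x⁻¹`. -/
theorem stmt_17 (p : ℕ) [Fact p.Prime] (hp5 : 5 ≤ p) :
    ∃ x : Aff (ZMod p), ∀ α : Aff (ZMod p) ≃* Aff (ZMod p), α x ≠ x⁻¹ := by

  have hp : p.Prime := Fact.out
  -- pick a generator g of (ZMod p)ˣ
  obtain ⟨g, hg⟩ := IsCyclic.exists_ofOrder_eq_natCard (α := (ZMod p)ˣ)
  have hcard : Nat.card (ZMod p)ˣ = p - 1 := by
    rw [Nat.card_eq_fintype_card, ZMod.card_units]
  have hgord : orderOf g = p - 1 := hg.trans hcard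
  have hg2 : g * g ≠ 1 := by
    intro h
    have : orderOf g ∣ 2 := orderOf_dvd_of_pow_eq_one (by rwa [pow_two])
    rw [hgord] at this
    have := Nat.le_of_dvd two_pos this
    omega
  refine ⟨⟨0, g⟩, fun α hα => ?_⟩
  -- α ⟨1,1⟩ has multiplicative part 1
  set u := α ⟨1, 1⟩ with hu
  have hup : u ^ p = 1 := by
    rw [hu, ← map_pow, Aff.pow_mk_one, ZMod.natCast_self, zero_mul, ← Aff.one_def, map_one]
  have hub : u.b = 1 := by
    have h1 : u.b ^ p = 1 := by
      have := congrArg Aff.bHom hup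
      simpa [map_pow, Aff.bHom, Aff.one_def] using this
    have h2 : u.b ^ (p - 1) = 1 := ZMod.units_pow_card_sub_one_eq_one p u.b
    have : u.b ^ p = u.b ^ (p - 1) * u.b := by
      rw [← pow_succ]
      congr 1
      omega
    rw [h1, h2, one_mul] at this
    exact this.symm
  set t : ZMod p := u.a with ht
  have hune : u ≠ 1 := by
    rw [hu]
    intro h
    have := α.injective (h.trans (map_one α).symm)
    rw [Aff.one_def] at this
    exact one_ne_zero (α := ZMod p) (congrArg Aff.a this)
  have htne : t ≠ 0 := by
    intro h
    apply hune
    rw [Aff.one_def]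
    exact Aff.ext h hub
  have huval : u = ⟨t, 1⟩ := Aff.ext rfl hub
  -- α ⟨g, 1⟩ = ⟨g * t, 1⟩
  have hgpow : (⟨(g : ZMod p), 1⟩ : Aff (ZMod p)) = (⟨1, 1⟩ : Aff (ZMod p)) ^ ((g : ZMod p)).val := by
    rw [Aff.pow_mk_one, mul_one, ZMod.natCast_val, ZMod.cast_id]
  have hαg : α ⟨(g : ZMod p), 1⟩ = ⟨(g : ZMod p) * t, 1⟩ := by
    rw [hgpow, map_pow, ← hu, huval, Aff.pow_mk_one, ZMod.natCast_val, ZMod.cast_id]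
  -- conjugation relation: x * ⟨1,1⟩ = ⟨g,1⟩ * x
  have hconj : (⟨0, g⟩ : Aff (ZMod p)) * ⟨1, 1⟩ = (⟨(g : ZMod p), 1⟩ : Aff (ZMod p)) * ⟨0, g⟩ := by
    rw [Aff.mul_def, Aff.mul_def]
    exact Aff.ext (by simp) (by simp)
  have hxinv : (⟨0, g⟩ : Aff (ZMod p))⁻¹ = ⟨0, g⁻¹⟩ := by
    rw [Aff.inv_def]
    refine Aff.ext ?_ rfl
    show -(((g⁻¹ : (ZMod p)ˣ) : ZMod p) * (0 : ZMod p)) = 0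
    rw [mul_zero, neg_zero]
  have hkey := congrArg α hconj
  rw [map_mul, map_mul, hα, hxinv, ← hu, huval, hαg, Aff.mul_def, Aff.mul_def] at hkey
  have h1 := congrArg Aff.a hkey
  simp only at h1
  rw [zero_add, mul_zero, add_zero] at h1
  have hgg : ((g⁻¹ : (ZMod p)ˣ) : ZMod p) = (g : ZMod p) :=
    mul_right_cancel₀ htne h1
  apply hg2
  apply Units.ext
  push_cast
  nth_rewrite 1 [← hgg]
  exact Units.inv_mul g
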